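/- Intrinsic implicit vakonomic Euler-Lagrange equations, pointwise form: let 𝔏 : ℝ^n × ℝ^n × ℝ^m → ℝ be differentiable at (q,v,λ), define the generalized energy E(q,v,p,λ) = p·v − 𝔏(q,v,λ) on ℝ^n × ℝ^n × ℝ^n × ℝ^m, and define the presymplectic bilinear form Ω̄ on ℝ^n × ℝ^n × ℝ^n × ℝ^m by Ω̄((q̇,v̇,ṗ,λ̇),(δq,δv,δp,δλ)) = q̇·δp − ṗ·δq. Then for any (q̇,v̇,ṗ,λ̇) ∈ ℝ^n × ℝ^n × ℝ^n × ℝ^m, the linear functional Ω̄((q̇,v̇,ṗ,λ̇), ·) equals the Fréchet derivative of E at (q,v,p,λ) if and only if p = ∂𝔏/∂v(q,v,λ), q̇ = v, ṗ = ∂𝔏/∂q(q,v,λ), and ∂𝔏/∂λ(q,v,λ) = 0. -/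

import Mathlib

open scoped BigOperators

/-- The dot product on `ℝ^k`. -/
def dot {k : ℕ} (x y : Fin k → ℝ) : ℝ := ∑ i, x i * y i

lemma dot_single {k : ℕ} (a : Fin k → ℝ) (i : Fin k) :
    dot a (Pi.single i 1) = a i := by
  simp [dot, Pi.single_apply, mul_ite]

lemma dot_zero_right {k : ℕ} (a : Fin k → ℝ) : dot a 0 = 0 := by simp [dot]

lemma dot_zero_left {k : ℕ} (a : Fin k → ℝ) : dot 0 a = 0 := by simp [dot]

/-- Projection `(q,v,p,λ) ↦ (q,v,λ)`. -/
noncomputable def projQVL (n m : ℕ) :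
    ((Fin n → ℝ) × (Fin n → ℝ) × (Fin n → ℝ) × (Fin m → ℝ)) →L[ℝ]
      ((Fin n → ℝ) × (Fin n → ℝ) × (Fin m → ℝ)) :=
  (ContinuousLinearMap.fst ℝ _ _).prod
    (((ContinuousLinearMap.fst ℝ _ _).comp (ContinuousLinearMap.snd ℝ _ _)).prod
      ((ContinuousLinearMap.snd ℝ _ _).comp
        ((ContinuousLinearMap.snd ℝ _ _).comp (ContinuousLinearMap.snd ℝ _ _))))

lemma projQVL_apply {n m : ℕ}
    (y : (Fin n → ℝ) × (Fin n → ℝ) × (Fin n → ℝ) × (Fin m → ℝ)) :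
    projQVL n m y = (y.1, y.2.1, y.2.2.2) := rfl

/-- Coordinate `v i` on the quadruple space. -/
noncomputable def coordV {n m : ℕ} (i : Fin n) :
    ((Fin n → ℝ) × (Fin n → ℝ) × (Fin n → ℝ) × (Fin m → ℝ)) →L[ℝ] ℝ :=
  (ContinuousLinearMap.proj i).comp
    ((ContinuousLinearMap.fst ℝ _ _).comp (ContinuousLinearMap.snd ℝ _ _))

lemma coordV_apply {n m : ℕ} (i : Fin n)
    (y : (Fin n → ℝ) × (Fin n → ℝ) × (Fin n → ℝ) × (Fin m → ℝ)) :
    coordV i y = y.2.1 i := rfl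

/-- Coordinate `p i` on the quadruple space. -/
noncomputable def coordP {n m : ℕ} (i : Fin n) :
    ((Fin n → ℝ) × (Fin n → ℝ) × (Fin n → ℝ) × (Fin m → ℝ)) →L[ℝ] ℝ :=
  (ContinuousLinearMap.proj i).comp
    ((ContinuousLinearMap.fst ℝ _ _).comp
      ((ContinuousLinearMap.snd ℝ _ _).comp (ContinuousLinearMap.snd ℝ _ _)))

lemma coordP_apply {n m : ℕ} (i : Fin n)
    (y : (Fin n → ℝ) × (Fin n → ℝ) × (Fin n → ℝ) × (Fin m → ℝ)) :
    coordP i y = y.2.2.1 i := rfl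

/-- intrinsic implicit vakonomic Euler-Lagrange equations,
pointwise form.  With `E(q,v,p,λ) = p·v − 𝔏(q,v,λ)` and the presymplectic
form `Ω̄((q̇,v̇,ṗ,λ̇),(δq,δv,δp,δλ)) = q̇·δp − ṗ·δq`, the functional
`Ω̄((q̇,v̇,ṗ,λ̇),·)` is the Fréchet derivative of `E` at `(q,v,p,λ)` iff
`p = ∂𝔏/∂v`, `q̇ = v`, `ṗ = ∂𝔏/∂q` and `∂𝔏/∂λ = 0`.  Here `Gq, Gv, Gl`
are the vectors representing the partial Fréchet derivatives of `𝔏`. -/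
theorem intrinsic_vakonomic_pointwise {n m : ℕ}
    (𝔏 : (Fin n → ℝ) × (Fin n → ℝ) × (Fin m → ℝ) → ℝ)
    (q v p : Fin n → ℝ) (l : Fin m → ℝ)
    (Gq Gv : Fin n → ℝ) (Gl : Fin m → ℝ)
    (h𝔏 : ∃ f : ((Fin n → ℝ) × (Fin n → ℝ) × (Fin m → ℝ)) →L[ℝ] ℝ,
      HasFDerivAt 𝔏 f (q, v, l) ∧
      ∀ y : (Fin n → ℝ) × (Fin n → ℝ) × (Fin m → ℝ),
        f y = dot Gq y.1 + dot Gv y.2.1 + dot Gl y.2.2)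
    (E : (Fin n → ℝ) × (Fin n → ℝ) × (Fin n → ℝ) × (Fin m → ℝ) → ℝ)
    (hE : ∀ x : (Fin n → ℝ) × (Fin n → ℝ) × (Fin n → ℝ) × (Fin m → ℝ),
      E x = dot x.2.2.1 x.2.1 - 𝔏 (x.1, x.2.1, x.2.2.2))
    (qd vd pd : Fin n → ℝ) (ld : Fin m → ℝ) :
    (∃ g : ((Fin n → ℝ) × (Fin n → ℝ) × (Fin n → ℝ) × (Fin m → ℝ)) →L[ℝ] ℝ,
      HasFDerivAt E g (q, v, p, l) ∧
      ∀ y : (Fin n → ℝ) × (Fin n → ℝ) × (Fin n → ℝ) × (Fin m → ℝ),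
        g y = dot qd y.2.2.1 - dot pd y.1)
    ↔ (p = Gv ∧ qd = v ∧ pd = Gq ∧ Gl = 0) := by
  classical
  obtain ⟨f, hf, hfval⟩ := h𝔏
  set D : ((Fin n → ℝ) × (Fin n → ℝ) × (Fin n → ℝ) × (Fin m → ℝ)) →L[ℝ] ℝ :=
    (∑ i : Fin n, ((p i • coordV (m := m) i) + (v i • coordP i))) -
      f.comp (projQVL n m) with hDdef
  have hDval : ∀ y : (Fin n → ℝ) × (Fin n → ℝ) × (Fin n → ℝ) × (Fin m → ℝ),
      D y = dot p y.2.1 + dot v y.2.2.1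
        - (dot Gq y.1 + dot Gv y.2.1 + dot Gl y.2.2.2) := by
    intro y
    rw [hDdef]
    rw [ContinuousLinearMap.sub_apply, ContinuousLinearMap.comp_apply,
      projQVL_apply, hfval, ContinuousLinearMap.sum_apply]
    simp only [ContinuousLinearMap.add_apply, ContinuousLinearMap.smul_apply,
      coordV_apply, coordP_apply, smul_eq_mul]
    rw [Finset.sum_add_distrib]
    simp [dot]
  have hD : HasFDerivAt E D (q, v, p, l) := by
    have hEeq : E = fun x => (∑ i : Fin n, x.2.2.1 i * x.2.1 i)
        - 𝔏 (projQVL n m x) := by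
      funext x
      rw [hE x, projQVL_apply]
      simp [dot]
    rw [hEeq, hDdef]
    refine HasFDerivAt.sub ?_ ?_
    · refine HasFDerivAt.fun_sum ?_
      intro i _
      have h3 : HasFDerivAt
          (fun y : (Fin n → ℝ) × (Fin n → ℝ) × (Fin n → ℝ) × (Fin m → ℝ) =>
            y.2.2.1 i) (coordP (n := n) (m := m) i) (q, v, p, l) :=
        (coordP i).hasFDerivAt
      have h2 : HasFDerivAt
          (fun y : (Fin n → ℝ) × (Fin n → ℝ) × (Fin n → ℝ) × (Fin m → ℝ) =>
            y.2.1 i) (coordV (n := n) (m := m) i) (q, v, p, l) :=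
        (coordV i).hasFDerivAt
      exact h3.mul h2
    · exact hf.comp (q, v, p, l) (projQVL n m).hasFDerivAt
  constructor
  · rintro ⟨g, hg, hgval⟩
    have hgD : g = D := hg.unique hD
    have key : ∀ y : (Fin n → ℝ) × (Fin n → ℝ) × (Fin n → ℝ) × (Fin m → ℝ),
        dot qd y.2.2.1 - dot pd y.1
          = dot p y.2.1 + dot v y.2.2.1
            - (dot Gq y.1 + dot Gv y.2.1 + dot Gl y.2.2.2) := by
      intro y
      rw [← hgval y, hgD, hDval y]
    refine ⟨?_, ?_, ?_, ?_⟩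
    · funext i
      have h := key (0, Pi.single i 1, 0, 0)
      simp only [dot_single, dot_zero_right] at h
      linarith
    · funext i
      have h := key (0, 0, Pi.single i 1, 0)
      simp only [dot_single, dot_zero_right] at h
      linarith
    · funext i
      have h := key (Pi.single i 1, 0, 0, 0)
      simp only [dot_single, dot_zero_right] at h
      linarith
    · funext j
      have h := key (0, 0, 0, Pi.single j 1)
      simp only [dot_single, dot_zero_right] at h
      have : Gl j = 0 := by linarith
      simpa using this
  · rintro ⟨hp, hqd, hpd, hGl⟩
    refine ⟨D, hD, ?_⟩
    intro y
    rw [hDval y, hp, hqd, hpd, hGl, dot_zero_left]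
    ring
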